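/- If G is NWUE with mean α, i.e. ∫₀^∞ (1 − G(v)) dv = α and ∫_t^∞ (1 − G(v)) dv ≥ α(1 − G(t)) for all t ≥ 0, and V(G) is finite, then V(G) ≥ V(G^M), where G^M(v) = 1 − e^{−v/α} is the exponential distribution function with mean α. (This is formula (1.9): with NWUE service times the M/G/∞ busy period variance is at least the M/M/∞ one.) -/

import Mathlib

open MeasureTheory Real Set Filter

/-- Formula (1.9): with NWUE service times, if the M/G/∞ busy period variance is finite,
it is at least the M/M/∞ one, `V(G) ≥ V(G^M)` where `G^M` is exponential with mean `α`. -/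
theorem nwue_busy_period_variance_ge_exponential
    (G : ℝ → ℝ)
    (hmono : Monotone G)
    (hrc : ∀ v : ℝ, ContinuousWithinAt G (Set.Ici v) v)
    (hneg : ∀ v : ℝ, v < 0 → G v = 0)
    (hlim : Tendsto G atTop (nhds 1))
    (lam α ρ : ℝ)
    (hlam : 0 < lam)
    (hInt : IntegrableOn (fun v => 1 - G v) (Ioi 0))
    (hα : α = ∫ v in Ioi (0:ℝ), (1 - G v))
    (hαpos : 0 < α)
    (hρ : ρ = lam * α)
    (hNWUE : ∀ t : ℝ, 0 ≤ t → α * (1 - G t) ≤ ∫ v in Ioi t, (1 - G v))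
    (hfin : IntegrableOn
      (fun t => exp (lam * ∫ v in Ioi t, (1 - G v)) - 1) (Ioi 0))
    (GM : ℝ → ℝ)
    (hGM : ∀ v : ℝ, 0 ≤ v → GM v = 1 - exp (-v / α))
    (hGMneg : ∀ v : ℝ, v < 0 → GM v = 0) :
    (2 * exp ρ / lam) * (∫ t in Ioi (0:ℝ), (exp (lam * ∫ v in Ioi t, (1 - GM v)) - 1))
        - ((exp ρ - 1) / lam) ^ 2
      ≤ (2 * exp ρ / lam) * (∫ t in Ioi (0:ℝ), (exp (lam * ∫ v in Ioi t, (1 - G v)) - 1))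
        - ((exp ρ - 1) / lam) ^ 2 := by
  set f : ℝ → ℝ := fun v => 1 - G v with hf
  have hfmeas : Measurable f := (measurable_const.sub hmono.measurable)
  set h : ℝ → ℝ := fun t => ∫ v in Ioi t, f v with hh
  -- f is nonneg
  have hG1 : ∀ v : ℝ, G v ≤ 1 := fun v => hmono.ge_of_tendsto hlim v
  have hfnn : ∀ v : ℝ, 0 ≤ f v := fun v => by simp [hf]; exact hG1 v
  -- integrability on any Ioi t with t ≥ 0
  have hIntt : ∀ t : ℝ, 0 ≤ t → IntegrableOn f (Ioi t) := fun t ht =>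
    hInt.mono_set (Ioi_subset_Ioi ht)
  -- h t = α - ∫_0^t f for t ≥ 0
  have hsplit : ∀ t : ℝ, 0 ≤ t → h t = α - ∫ v in (0:ℝ)..t, f v := by
    intro t ht
    have hunion : Ioc 0 t ∪ Ioi t = Ioi (0:ℝ) := Ioc_union_Ioi_eq_Ioi ht
    have : ∫ v in Ioi (0:ℝ), f v = (∫ v in Ioc 0 t, f v) + ∫ v in Ioi t, f v := by
      rw [← hunion, setIntegral_union (Ioc_disjoint_Ioi le_rfl)
        measurableSet_Ioi (hInt.mono_set (by rw [← hunion]; exact subset_union_left))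
        (hInt.mono_set (by rw [← hunion]; exact subset_union_right))]
    rw [intervalIntegral.integral_of_le ht]
    rw [hα]
    simp only [hh]
    rw [this]
    ring
  have hα0 : h 0 = α := by
    rw [hsplit 0 le_rfl]; simp
  -- right derivative of h
  have hderiv : ∀ t : ℝ, 0 ≤ t → HasDerivWithinAt h (-(f t)) (Ici t) t := by
    intro t ht
    have hii : IntervalIntegrable f volume 0 t := by
      rw [intervalIntegrable_iff_integrableOn_Ioc_of_le ht]
      exact hInt.mono_set Ioc_subset_Ioi_self
    have hFTC : HasDerivWithinAt (fun u => ∫ x in (0:ℝ)..u, f x) (f t) (Ici t) t :=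
      intervalIntegral.integral_hasDerivWithinAt_right (s := Ici t) (t := Ioi t) hii
        ⟨univ, univ_mem, hfmeas.aestronglyMeasurable⟩
        (((continuousWithinAt_const).sub (hrc t)).mono Ioi_subset_Ici_self)
    have hF : HasDerivWithinAt (fun u => α - ∫ x in (0:ℝ)..u, f x) (-(f t)) (Ici t) t := by
      exact ((hasDerivWithinAt_const t (Ici t) α).sub hFTC).congr_deriv (by simp)
    exact hF.congr (fun x hx => hsplit x (ht.trans hx)) (hsplit t ht)
  -- continuity of h on any Icc 0 b
  have hcont : ∀ b : ℝ, 0 ≤ b → ContinuousOn h (Icc 0 b) := by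
    intro b hb
    have hprim : ContinuousOn (fun x => α - ∫ v in Ioc 0 x, f v) (Icc 0 b) :=
      continuousOn_const.sub (intervalIntegral.continuousOn_primitive
        ((integrableOn_Icc_iff_integrableOn_Ioc (ha := enorm_ne_top)).mpr (hInt.mono_set Ioc_subset_Ioi_self)))
    apply hprim.congr
    intro x hx
    rw [hsplit x hx.1, intervalIntegral.integral_of_le hx.1]
  -- ψ = h t * exp (t/α) is ≥ α on Ici 0 (Gronwall-type fencing)
  have key : ∀ t : ℝ, 0 ≤ t → α * exp (-t / α) ≤ h t := by
    intro t ht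
    set ψ : ℝ → ℝ := fun x => h x * exp (x / α) with hψ
    set ψ' : ℝ → ℝ := fun x => -(f x) * exp (x / α) + h x * (exp (x / α) * α⁻¹) with hψ'
    have hψd : ∀ x ∈ Ico (0:ℝ) t, HasDerivWithinAt ψ (ψ' x) (Ici x) x := by
      intro x hx
      have he : HasDerivWithinAt (fun x : ℝ => exp (x / α)) (exp (x / α) * α⁻¹) (Ici x) x := by
        have := ((hasDerivAt_id x).div_const α).exp
        simpa [div_eq_mul_inv] using this.hasDerivWithinAt
      exact (hderiv x hx.1).mul he
    have hψcont : ContinuousOn ψ (Icc 0 t) :=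
      (hcont t ht).mul ((Real.continuous_exp.comp (continuous_id.div_const α)).continuousOn)
    have bound : ∀ x ∈ Ico (0:ℝ) t, (0:ℝ) ≤ ψ' x := by
      intro x hx
      have h1 : α * f x ≤ h x := hNWUE x hx.1
      have h2 : (0:ℝ) < exp (x / α) := exp_pos _
      have : ψ' x = exp (x / α) * (h x * α⁻¹ - f x) := by simp [hψ']; ring
      rw [this]
      have : (0:ℝ) ≤ h x * α⁻¹ - f x := by
        rw [sub_nonneg, ← div_eq_mul_inv, le_div_iff₀ hαpos]
        linarith [h1]
      positivity
    have := image_le_of_deriv_right_le_deriv_boundary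
      (f := fun _ : ℝ => α) (f' := fun _ : ℝ => 0) (B := ψ) (B' := ψ') (a := 0) (b := t)
      continuousOn_const (fun x _ => hasDerivWithinAt_const x _ α)
      (by simp [hψ, hα0]) hψcont hψd (fun x hx => bound x hx)
    have hαψ : α ≤ ψ t := this (right_mem_Icc.2 ht)
    have h2 : (0:ℝ) < exp (t / α) := exp_pos _
    have : α * exp (-t / α) * exp (t / α) ≤ h t * exp (t / α) := by
      rw [mul_assoc, ← exp_add]
      have he : -t / α + t / α = 0 := by ring
      rw [he, exp_zero, mul_one]
      exact hαψ
    exact le_of_mul_le_mul_right this h2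
  -- exponential tail integral: ∫_{Ioi t} (1 - GM v) = α * exp (-t/α) for t ≥ 0
  have hGMtail : ∀ t : ℝ, 0 ≤ t → (∫ v in Ioi t, (1 - GM v)) = α * exp (-t / α) := by
    intro t ht
    have hcongr : ∀ v ∈ Ioi t, (1 - GM v) = exp (-v / α) := by
      intro v hv
      rw [hGM v (ht.trans (le_of_lt hv))]; ring
    rw [setIntegral_congr_fun measurableSet_Ioi hcongr]
    have hder : ∀ x ∈ Ioi t, HasDerivAt (fun v => -α * exp (-v / α)) (exp (-x / α)) x := by
      intro x _
      have h1 : HasDerivAt (fun v : ℝ => -v / α) (-1 / α) x := by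
        simpa using ((hasDerivAt_id x).neg.div_const α)
      have := (h1.exp).const_mul (-α)
      refine this.congr_deriv ?_
      rw [mul_comm (exp _), ← mul_assoc, show -α * (-1 / α) = 1 by rw [neg_div, neg_mul_neg, mul_one_div, div_self hαpos.ne'], one_mul]
    have hint : IntegrableOn (fun v => exp (-v / α)) (Ioi t) := by
      have := exp_neg_integrableOn_Ioi t (b := α⁻¹) (by positivity)
      simpa [neg_div, div_eq_mul_inv, mul_comm] using this
    have htend : Tendsto (fun v => -α * exp (-v / α)) atTop (nhds 0) := by
      have h1 : Tendsto (fun v : ℝ => -v / α) atTop atBot := by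
        apply Tendsto.atBot_div_const hαpos
        exact tendsto_neg_atBot_iff.mpr tendsto_id
      have := (tendsto_exp_atBot.comp h1).const_mul (-α)
      simpa using this
    have hcw : ContinuousWithinAt (fun v => -α * exp (-v / α)) (Ici t) t :=
      (continuous_const.mul (Real.continuous_exp.comp
        ((continuous_id.neg).div_const α))).continuousWithinAt
    rw [integral_Ioi_of_hasDerivAt_of_tendsto hcw hder hint htend]
    ring
  -- pointwise inequality of integrands on Ioi 0
  have hpt : ∀ t ∈ Ioi (0:ℝ),
      exp (lam * ∫ v in Ioi t, (1 - GM v)) - 1 ≤ exp (lam * ∫ v in Ioi t, (1 - G v)) - 1 := by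
    intro t ht
    have ht' : (0:ℝ) ≤ t := le_of_lt ht
    rw [hGMtail t ht']
    have := key t ht'
    have : lam * (α * exp (-t / α)) ≤ lam * ∫ v in Ioi t, (1 - G v) :=
      mul_le_mul_of_nonneg_left this (le_of_lt hlam)
    exact sub_le_sub_right (exp_le_exp.2 this) 1
  -- integrability of LHS integrand
  have hMint : IntegrableOn
      (fun t => exp (lam * ∫ v in Ioi t, (1 - GM v)) - 1) (Ioi 0) := by
    apply Integrable.mono' hfin
    · have hc : Continuous (fun t : ℝ => exp (lam * (α * exp (-t / α))) - 1) :=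
        (Real.continuous_exp.comp (continuous_const.mul (continuous_const.mul
          (Real.continuous_exp.comp ((continuous_id.neg).div_const α))))).sub continuous_const
      apply hc.aestronglyMeasurable.congr
      filter_upwards [ae_restrict_mem measurableSet_Ioi] with t ht
      rw [hGMtail t (le_of_lt ht)]
    · filter_upwards [ae_restrict_mem measurableSet_Ioi] with t ht
      have h1 : (0:ℝ) ≤ exp (lam * ∫ v in Ioi t, (1 - GM v)) - 1 := by
        have h0 : (0:ℝ) ≤ lam * ∫ v in Ioi t, (1 - GM v) := by
          rw [hGMtail t (le_of_lt ht)]; positivity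
        linarith [one_le_exp h0]
      rw [Real.norm_eq_abs, abs_of_nonneg h1]
      exact hpt t ht
  have hint_le : (∫ t in Ioi (0:ℝ), (exp (lam * ∫ v in Ioi t, (1 - GM v)) - 1))
      ≤ ∫ t in Ioi (0:ℝ), (exp (lam * ∫ v in Ioi t, (1 - G v)) - 1) :=
    setIntegral_mono_on hMint hfin measurableSet_Ioi hpt
  have hcoef : (0:ℝ) ≤ 2 * exp ρ / lam := by positivity
  have := mul_le_mul_of_nonneg_left hint_le hcoef
  linarith
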